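/- Fix 0 < δ < 1 and let t > 0 satisfy erf(t) = δ. Let a : ℝ → ℝ be a function such that for every ε > 0, erfc(a(ε)) − e^ε · erfc(√(a(ε)² + ε)) = 2δ. Then (a(ε) + √(a(ε)² + ε))/ε tends to 1/(2t) as ε → 0 from the right. (Equivalently, given fixed δ, the optimal Gaussian noise amount σ_DP-OPT = (a(ε)+√(a(ε)²+ε))·Δ/(ε√2) for (ε,δ)-differential privacy converges to its upper bound Δ/(2√2·inverf(δ)) as ε → 0.) -/

import Mathlib

open Real

/-- The Gauss error function `erf x = (2/√π) ∫₀ˣ e^{−t²} dt`. -/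
noncomputable def erf (x : ℝ) : ℝ := 2 / Real.sqrt Real.pi * ∫ t in (0:ℝ)..x, Real.exp (-t ^ 2)

/-- The complementary error function `erfc x = 1 - erf x`. -/
noncomputable def erfc (x : ℝ) : ℝ := 1 - erf x

lemma erf_hasDerivAt (x : ℝ) :
    HasDerivAt erf (2 / Real.sqrt Real.pi * Real.exp (-x ^ 2)) x := by
  have hc : Continuous fun t : ℝ => Real.exp (-t ^ 2) := by continuity
  have h := intervalIntegral.integral_hasDerivAt_right
    (hc.intervalIntegrable 0 x) (hc.stronglyMeasurableAtFilter _ _) hc.continuousAt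
  exact h.const_mul _

lemma erf_continuous : Continuous erf :=
  continuous_iff_continuousAt.2 fun x => (erf_hasDerivAt x).continuousAt

lemma erf_strictMono : StrictMono erf :=
  strictMono_of_hasDerivAt_pos erf_hasDerivAt fun x =>
    mul_pos (div_pos two_pos (Real.sqrt_pos.2 Real.pi_pos)) (Real.exp_pos _)

lemma erf_neg (x : ℝ) : erf (-x) = - erf x := by
  have h := intervalIntegral.integral_comp_neg (a := (0:ℝ)) (b := -x)
    (fun t => Real.exp (-t ^ 2))
  simp only [neg_neg, neg_zero] at h
  unfold erf
  rw [show (∫ t in (0:ℝ)..(-x), Real.exp (-t ^ 2))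
      = ∫ t in (0:ℝ)..(-x), Real.exp (-(-t) ^ 2) from by simp [neg_pow, neg_sq], h,
    intervalIntegral.integral_symm]
  ring

lemma erfc_hasDerivAt (x : ℝ) :
    HasDerivAt erfc (-(2 / Real.sqrt Real.pi * Real.exp (-x ^ 2))) x :=
  (erf_hasDerivAt x).const_sub 1

lemma erfc_continuous : Continuous erfc := continuous_const.sub erf_continuous

lemma lt_sqrt_sq_add {ε : ℝ} (hε : 0 < ε) (b : ℝ) : b < Real.sqrt (b ^ 2 + ε) :=
  calc b ≤ |b| := le_abs_self b
  _ = Real.sqrt (b ^ 2) := (Real.sqrt_sq_eq_abs b).symm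
  _ < Real.sqrt (b ^ 2 + ε) := Real.sqrt_lt_sqrt (sq_nonneg b) (lt_add_of_pos_right _ hε)

lemma G_hasDerivAt {ε : ℝ} (hε : 0 < ε) (b : ℝ) :
    HasDerivAt (fun b => erfc b - Real.exp ε * erfc (Real.sqrt (b ^ 2 + ε)))
      (2 / Real.sqrt Real.pi * Real.exp (-b ^ 2) * (b / Real.sqrt (b ^ 2 + ε) - 1)) b := by
  have hpos : 0 < b ^ 2 + ε := by positivity
  have hs : 0 < Real.sqrt (b ^ 2 + ε) := Real.sqrt_pos.2 hpos
  have h1 : HasDerivAt (fun b : ℝ => b ^ 2 + ε) (2 * b) b := by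
    simpa using (hasDerivAt_pow 2 b).add_const ε
  have h2 : HasDerivAt (fun b : ℝ => Real.sqrt (b ^ 2 + ε))
      (1 / (2 * Real.sqrt (b ^ 2 + ε)) * (2 * b)) b :=
    (Real.hasDerivAt_sqrt hpos.ne').comp b h1
  have h3 : HasDerivAt (fun b : ℝ => erfc (Real.sqrt (b ^ 2 + ε)))
      (-(2 / Real.sqrt Real.pi * Real.exp (-(Real.sqrt (b ^ 2 + ε)) ^ 2)) *
        (1 / (2 * Real.sqrt (b ^ 2 + ε)) * (2 * b))) b :=
    (erfc_hasDerivAt _).comp b h2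
  have h4 := (erfc_hasDerivAt b).sub ((h3.const_mul (Real.exp ε)))
  refine h4.congr_deriv ?_
  rw [Real.sq_sqrt hpos.le]
  rw [show Real.exp (-(b ^ 2 + ε)) = Real.exp (-b^2) * Real.exp (-ε) from by
    rw [← Real.exp_add]; ring_nf]
  rw [show Real.exp ε * (-(2 / Real.sqrt Real.pi * (Real.exp (-b ^ 2) * Real.exp (-ε))) *
      (1 / (2 * Real.sqrt (b ^ 2 + ε)) * (2 * b)))
      = (Real.exp ε * Real.exp (-ε)) * (-(2 / Real.sqrt Real.pi * Real.exp (-b ^ 2)) *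
      (b / Real.sqrt (b ^ 2 + ε))) from by field_simp]
  rw [← Real.exp_add, add_neg_cancel, Real.exp_zero]
  ring

lemma G_strictAnti {ε : ℝ} (hε : 0 < ε) :
    StrictAnti (fun b => erfc b - Real.exp ε * erfc (Real.sqrt (b ^ 2 + ε))) := by
  refine strictAnti_of_hasDerivAt_neg (G_hasDerivAt hε) fun b => ?_
  have hs : 0 < Real.sqrt (b ^ 2 + ε) := Real.sqrt_pos.2 (by positivity)
  refine mul_neg_of_pos_of_neg
    (mul_pos (div_pos two_pos (Real.sqrt_pos.2 Real.pi_pos)) (Real.exp_pos _)) ?_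
  rw [sub_neg, div_lt_one hs]
  exact lt_sqrt_sq_add hε b

lemma G_zero {c : ℝ} (hc : c < 0) :
    erfc c - Real.exp 0 * erfc (Real.sqrt (c ^ 2 + 0)) = -2 * erf c := by
  rw [Real.exp_zero, add_zero, Real.sqrt_sq_eq_abs, abs_of_neg hc]
  unfold erfc
  rw [erf_neg]
  ring

lemma G_tendsto (c : ℝ) :
    Filter.Tendsto (fun ε => erfc c - Real.exp ε * erfc (Real.sqrt (c ^ 2 + ε)))
      (nhds 0) (nhds (erfc c - Real.exp 0 * erfc (Real.sqrt (c ^ 2 + 0)))) := by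
  apply Continuous.tendsto
  exact continuous_const.sub (Real.continuous_exp.mul (erfc_continuous.comp
    (Real.continuous_sqrt.comp (continuous_const.add continuous_id))))

/-- Fix `0 < δ < 1` and `t > 0` with `erf t = δ`. If `a : ℝ → ℝ` satisfies, for all
`ε > 0`, `erfc (a ε) − e^ε · erfc (√((a ε)² + ε)) = 2δ`, then
`(a ε + √((a ε)² + ε))/ε → 1/(2t)` as `ε → 0⁺`. -/
theorem sigma_DP_OPT_tendsto_upper_bound (δ t : ℝ) (hδ0 : 0 < δ) (hδ1 : δ < 1)
    (ht : 0 < t) (hterf : erf t = δ) (a : ℝ → ℝ)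
    (ha : ∀ ε : ℝ, 0 < ε →
      erfc (a ε) - Real.exp ε * erfc (Real.sqrt ((a ε) ^ 2 + ε)) = 2 * δ) :
    Filter.Tendsto (fun ε : ℝ => (a ε + Real.sqrt ((a ε) ^ 2 + ε)) / ε)
      (nhdsWithin 0 (Set.Ioi 0)) (nhds (1 / (2 * t))) := by
  -- Step 1: a ε → -t
  have ha_tendsto : Filter.Tendsto a (nhdsWithin 0 (Set.Ioi 0)) (nhds (-t)) := by
    rw [Metric.tendsto_nhds]
    intro η hη
    set η' := min η t / 2 with hη'def
    have hη'0 : 0 < η' := by positivity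
    have hη't : η' < t := by
      have := min_le_right η t
      simp only [hη'def]; linarith
    have hη'η : η' < η := by
      have := min_le_left η t
      simp only [hη'def]; linarith [lt_min hη ht]
    have hc1 : (-t - η' : ℝ) < 0 := by linarith
    have hc2 : (-t + η' : ℝ) < 0 := by linarith
    have hG1 : -2 * erf (-t - η') > 2 * δ := by
      rw [show (-t - η' : ℝ) = -(t + η') from by ring, erf_neg]
      have := erf_strictMono (show t < t + η' by linarith)
      rw [hterf] at this; linarith
    have hG2 : -2 * erf (-t + η') < 2 * δ := by
      rw [show (-t + η' : ℝ) = -(t - η') from by ring, erf_neg]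
      have := erf_strictMono (show t - η' < t by linarith)
      rw [hterf] at this; linarith
    have h1 : ∀ᶠ ε in nhdsWithin 0 (Set.Ioi 0),
        2 * δ < erfc (-t - η') - Real.exp ε * erfc (Real.sqrt ((-t - η') ^ 2 + ε)) := by
      apply Filter.Eventually.filter_mono nhdsWithin_le_nhds
      apply (G_tendsto (-t - η')).eventually (eventually_gt_nhds ?_)
      rw [G_zero hc1]; exact hG1
    have h2 : ∀ᶠ ε in nhdsWithin 0 (Set.Ioi 0),
        erfc (-t + η') - Real.exp ε * erfc (Real.sqrt ((-t + η') ^ 2 + ε)) < 2 * δ := by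
      apply Filter.Eventually.filter_mono nhdsWithin_le_nhds
      apply (G_tendsto (-t + η')).eventually (eventually_lt_nhds ?_)
      rw [G_zero hc2]; exact hG2
    filter_upwards [h1, h2, self_mem_nhdsWithin] with ε he1 he2 hε
    rw [Set.mem_Ioi] at hε
    have key := ha ε hε
    have hA : -t - η' < a ε := by
      by_contra hcon
      push_neg at hcon
      rcases eq_or_lt_of_le hcon with h | h
      · rw [← h, key] at he1; linarith
      · have := G_strictAnti hε h
        simp only at this
        rw [key] at this; linarith
    have hB : a ε < -t + η' := by
      by_contra hcon
      push_neg at hcon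
      rcases eq_or_lt_of_le hcon with h | h
      · rw [h, key] at he2; linarith
      · have := G_strictAnti hε h
        simp only at this
        rw [key] at this; linarith
    rw [Real.dist_eq, abs_lt]
    constructor <;> linarith
  -- Step 2: √(a ε ^ 2 + ε) → t
  have hid : Filter.Tendsto (fun ε : ℝ => ε) (nhdsWithin 0 (Set.Ioi 0)) (nhds 0) :=
    Filter.tendsto_id.mono_left nhdsWithin_le_nhds
  have hs_tendsto : Filter.Tendsto (fun ε => Real.sqrt ((a ε) ^ 2 + ε))
      (nhdsWithin 0 (Set.Ioi 0)) (nhds t) := by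
    have h1 : Filter.Tendsto (fun ε => (a ε) ^ 2 + ε) (nhdsWithin 0 (Set.Ioi 0))
        (nhds ((-t) ^ 2 + 0)) := ((ha_tendsto.pow 2).add hid)
    have h2 := (Real.continuous_sqrt.tendsto ((-t) ^ 2 + 0)).comp h1
    simpa [Real.sqrt_sq ht.le, Function.comp_def] using h2
  -- Step 3: difference tends to 2t; conclude via (a+s)/ε = 1/(s-a)
  have hdiff : Filter.Tendsto (fun ε => Real.sqrt ((a ε) ^ 2 + ε) - a ε)
      (nhdsWithin 0 (Set.Ioi 0)) (nhds (2 * t)) := by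
    have := hs_tendsto.sub ha_tendsto
    simpa [two_mul] using this
  have hfinal : Filter.Tendsto (fun ε => 1 / (Real.sqrt ((a ε) ^ 2 + ε) - a ε))
      (nhdsWithin 0 (Set.Ioi 0)) (nhds (1 / (2 * t))) :=
    Filter.Tendsto.div tendsto_const_nhds hdiff (by positivity)
  apply hfinal.congr'
  filter_upwards [self_mem_nhdsWithin] with ε hε
  rw [Set.mem_Ioi] at hε
  have hlt := lt_sqrt_sq_add hε (a ε)
  have hsq : Real.sqrt ((a ε) ^ 2 + ε) ^ 2 = (a ε) ^ 2 + ε :=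
    Real.sq_sqrt (by positivity)
  rw [div_eq_div_iff (sub_pos.2 hlt).ne' hε.ne']
  nlinarith [hsq]
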